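/- Let δ, δ′ be reals with 0 < δ′ < δ < 1/2 and 2δ − 1/2 < δ′, let C′ > 0 and K ≥ 0. Suppose f : [−1, 0) → [0, ∞) is continuous, f² is differentiable on (−1, 0), and (f²)′(t) ≤ K²·(−t)^{2δ−2} + ( (1/2 − δ′)·(−t)^{−1} + 4C′·(−t)^{δ−δ′−1} )·f(t)² for all t ∈ (−1, 0). Then for every t ∈ [−1, 0): f(t)² ≤ e^{4C′/(δ−δ′)} · ( (−t)^{δ′−1/2}·f(−1)² + (K²/(δ′ + 1/2 − 2δ))·(−t)^{2δ−1} ). -/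

import Mathlib

open Real Set

lemma negrpow_deriv (p : ℝ) {t : ℝ} (ht : t < 0) :
    HasDerivAt (fun t : ℝ => (-t) ^ p) (-(p * (-t) ^ (p - 1))) t := by
  have h1 : HasDerivAt (fun t : ℝ => -t) (-1) t := (hasDerivAt_id t).neg
  have h2 := (Real.hasDerivAt_rpow_const (x := -t) (p := p)
      (Or.inl (by linarith : (-t) ≠ 0))).comp t h1
  refine h2.congr_deriv ?_
  ring

noncomputable def Wf (p q c : ℝ) (t : ℝ) : ℝ := (-t) ^ p * Real.exp (c * (-t) ^ q)

lemma Wf_deriv (p q c : ℝ) {t : ℝ} (ht : t < 0) :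
    HasDerivAt (Wf p q c)
      (-(Wf p q c t * (p * (-t)⁻¹ + (c * q) * (-t) ^ (q - 1)))) t := by
  have ht0 : (0:ℝ) < -t := by linarith
  have h1 := negrpow_deriv p ht
  have h3 := ((negrpow_deriv q ht).const_mul c).exp
  have h4 := h1.mul h3
  refine h4.congr_deriv ?_
  have e1 : (-t) ^ (p - 1) = (-t) ^ p * (-t)⁻¹ := by
    rw [Real.rpow_sub ht0, Real.rpow_one, div_eq_mul_inv]
  simp only [Wf, e1]
  ring

theorem stmt13 (δ δ' C' K : ℝ) (hδ'0 : 0 < δ') (hδ'δ : δ' < δ) (hδ : δ < 1 / 2)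
    (hδ'' : 2 * δ - 1 / 2 < δ') (hC' : 0 < C') (hK : 0 ≤ K) (f : ℝ → ℝ)
    (hfnonneg : ∀ t ∈ Set.Ico (-1 : ℝ) 0, 0 ≤ f t)
    (hfcont : ContinuousOn f (Set.Ico (-1 : ℝ) 0))
    (hfdiff : DifferentiableOn ℝ (fun t => f t ^ 2) (Set.Ioo (-1 : ℝ) 0))
    (hineq : ∀ t ∈ Set.Ioo (-1 : ℝ) 0,
      deriv (fun t => f t ^ 2) t ≤
        K ^ 2 * (-t) ^ (2 * δ - 2) +
          ((1 / 2 - δ') * (-t)⁻¹ + 4 * C' * (-t) ^ (δ - δ' - 1)) * f t ^ 2) :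
    ∀ t ∈ Set.Ico (-1 : ℝ) 0,
      f t ^ 2 ≤ Real.exp (4 * C' / (δ - δ')) *
          ((-t) ^ (δ' - 1 / 2) * f (-1) ^ 2 + (K ^ 2 / (δ' + 1 / 2 - 2 * δ)) * (-t) ^ (2 * δ - 1)) := by
  have hq : (0:ℝ) < δ - δ' := by linarith
  have hL : (0:ℝ) < δ' + 1/2 - 2*δ := by linarith
  set p : ℝ := 1/2 - δ' with hp_def
  set q : ℝ := δ - δ' with hq_def
  set c : ℝ := 4 * C' / q with hc_def
  have hc : 0 < c := by positivity
  set L : ℝ := δ' + 1/2 - 2*δ with hL_def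
  set E : ℝ := Real.exp c with hE_def
  have hE1 : 1 ≤ E := Real.one_le_exp hc.le
  have hcq : c * q = 4 * C' := div_mul_cancel₀ _ hq.ne'
  set W : ℝ → ℝ := Wf p q c with hW_def
  set ψ : ℝ → ℝ := fun t => (K^2 * E / L) * (-t) ^ (-L) with hψ_def
  set u : ℝ → ℝ := fun t => W t * f t ^ 2 - ψ t with hu_def
  -- positivity facts for W
  have hWpos : ∀ t : ℝ, t < 0 → 0 < W t := by
    intro t ht
    have : (0:ℝ) < -t := by linarith
    simp only [hW_def, Wf]
    positivity
  -- ψ derivative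
  have hψd : ∀ t : ℝ, t < 0 → HasDerivAt ψ (K^2 * E * (-t) ^ (-L - 1)) t := by
    intro t ht
    have h := (negrpow_deriv (-L) ht).const_mul (K^2 * E / L)
    refine h.congr_deriv ?_
    have : -L - 1 = -L - 1 := rfl
    field_simp
  -- u is antitone on Ico (-1) 0
  have hanti : AntitoneOn u (Set.Ico (-1:ℝ) 0) := by
    apply antitoneOn_of_deriv_nonpos (convex_Ico _ _)
    · -- continuity
      apply ContinuousOn.sub
      · exact ContinuousOn.mul
          (fun x hx => ((Wf_deriv p q c (hx.2 : x < 0)).continuousAt).continuousWithinAt)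
          (hfcont.pow 2)
      · exact fun x hx => ((hψd x hx.2).continuousAt).continuousWithinAt
    · -- differentiability on interior
      rw [interior_Ico]
      intro x hx
      have hx0 : x < 0 := hx.2
      have hg : DifferentiableAt ℝ (fun t => f t ^ 2) x :=
        (hfdiff x hx).differentiableAt (isOpen_Ioo.mem_nhds hx)
      exact (((Wf_deriv p q c hx0).differentiableAt.mul hg).sub
        (hψd x hx0).differentiableAt).differentiableWithinAt
    · -- deriv nonpos
      rw [interior_Ico]
      intro x hx
      have hx0 : x < 0 := hx.2
      have hs0 : (0:ℝ) < -x := by linarith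
      have hs1 : -x ≤ 1 := by linarith [hx.1]
      have hg : DifferentiableAt ℝ (fun t => f t ^ 2) x :=
        (hfdiff x hx).differentiableAt (isOpen_Ioo.mem_nhds hx)
      have hgd : HasDerivAt (fun t => f t ^ 2) (deriv (fun t => f t ^ 2) x) x :=
        hg.hasDerivAt
      have hud : HasDerivAt u
          ((-(W x * (p * (-x)⁻¹ + (c * q) * (-x) ^ (q - 1)))) * f x ^ 2
            + W x * deriv (fun t => f t ^ 2) x - K^2 * E * (-x) ^ (-L - 1)) x :=
        ((Wf_deriv p q c hx0).mul hgd).sub (hψd x hx0)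
      rw [hud.deriv]
      -- now the inequality
      have hW0 : 0 < W x := hWpos x hx0
      have hineqx := hineq x hx
      rw [hcq]
      have h5 : W x * deriv (fun t => f t ^ 2) x ≤
          W x * (K ^ 2 * (-x) ^ (2 * δ - 2)
            + (p * (-x)⁻¹ + 4 * C' * (-x) ^ (q - 1)) * f x ^ 2) := by
        apply mul_le_mul_of_nonneg_left _ hW0.le
        convert hineqx using 3
      have h6 : W x * (K ^ 2 * (-x) ^ (2 * δ - 2)) ≤ K^2 * E * (-x) ^ (-L - 1) := by
        have hWle : W x ≤ (-x) ^ p * E := by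
          simp only [hW_def, Wf, hE_def]
          apply mul_le_mul_of_nonneg_left _ (Real.rpow_nonneg hs0.le p)
          apply Real.exp_le_exp.mpr
          have : (-x) ^ q ≤ 1 := Real.rpow_le_one hs0.le hs1 hq.le
          nlinarith
        have hexp : (-x) ^ p * (-x) ^ (2*δ - 2) = (-x) ^ (-L - 1) := by
          rw [← Real.rpow_add hs0]
          congr 1
          simp only [hp_def, hL_def]
          ring
        calc W x * (K ^ 2 * (-x) ^ (2 * δ - 2))
            ≤ ((-x) ^ p * E) * (K ^ 2 * (-x) ^ (2 * δ - 2)) := by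
              apply mul_le_mul_of_nonneg_right hWle (by positivity)
          _ = K^2 * E * ((-x) ^ p * (-x) ^ (2*δ-2)) := by ring
          _ = K^2 * E * (-x) ^ (-L - 1) := by rw [hexp]
      nlinarith [h5, h6]
  -- apply antitonicity: u t ≤ u (-1)
  intro t ht
  have ht0 : t < 0 := ht.2
  have hs0 : (0:ℝ) < -t := by linarith
  have hm1 : (-1:ℝ) ∈ Set.Ico (-1:ℝ) 0 := by constructor <;> norm_num
  have hut : u t ≤ u (-1) := hanti hm1 ht ht.1
  have hW1 : W (-1) = E := by
    simp only [hW_def, Wf, hE_def]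
    norm_num
  have hψ1 : ψ (-1) = K^2 * E / L := by
    simp only [hψ_def]
    norm_num
  have hψnn : 0 ≤ ψ (-1) := by rw [hψ1]; positivity
  have key : W t * f t ^ 2 ≤ E * f (-1) ^ 2 + (K^2 * E / L) * (-t) ^ (-L) := by
    have h7 : W t * f t ^ 2 - ψ t ≤ W (-1) * f (-1) ^ 2 - ψ (-1) := hut
    rw [hW1, hψ1] at h7
    have h8 : 0 ≤ K^2 * E / L := by positivity
    have h9 : ψ t = K ^ 2 * E / L * (-t) ^ (-L) := rfl
    linarith [h7, h8, h9.le, h9.ge]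
  -- final algebra
  set R : ℝ := E * ((-t) ^ (δ' - 1/2) * f (-1) ^ 2 + (K ^ 2 / L) * (-t) ^ (2 * δ - 1)) with hR_def
  have hRnn : 0 ≤ R := by
    have := Real.rpow_nonneg hs0.le (δ' - 1/2)
    have := Real.rpow_nonneg hs0.le (2*δ - 1)
    have hE0 : 0 < E := Real.exp_pos _
    positivity
  have hRsp : R * (-t) ^ p = E * f (-1) ^ 2 + (K^2 * E / L) * (-t) ^ (-L) := by
    have e1 : (-t) ^ (δ' - 1/2) * (-t) ^ p = 1 := by
      rw [← Real.rpow_add hs0]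
      simp only [hp_def]
      norm_num
    have e2 : (-t) ^ (2*δ - 1) * (-t) ^ p = (-t) ^ (-L) := by
      rw [← Real.rpow_add hs0]
      congr 1
      simp only [hp_def, hL_def]
      ring
    calc R * (-t) ^ p
        = E * f (-1)^2 * ((-t) ^ (δ' - 1/2) * (-t) ^ p)
          + (K^2 * E / L) * ((-t) ^ (2*δ-1) * (-t) ^ p) := by rw [hR_def]; ring
      _ = E * f (-1) ^ 2 + (K^2 * E / L) * (-t) ^ (-L) := by rw [e1, e2]; ring
  have hspW : (-t) ^ p ≤ W t := by
    simp only [hW_def, Wf]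
    nth_rewrite 1 [← mul_one ((-t) ^ p)]
    apply mul_le_mul_of_nonneg_left _ (Real.rpow_nonneg hs0.le p)
    exact Real.one_le_exp (by positivity)
  have hfinal : f t ^ 2 * W t ≤ R * W t := by
    calc f t ^ 2 * W t = W t * f t ^ 2 := by ring
      _ ≤ R * (-t) ^ p := by rw [hRsp]; exact key
      _ ≤ R * W t := mul_le_mul_of_nonneg_left hspW hRnn
  have := le_of_mul_le_mul_right hfinal (hWpos t ht0)
  calc f t ^ 2 ≤ R := this
    _ = Real.exp (4 * C' / (δ - δ')) *
          ((-t) ^ (δ' - 1 / 2) * f (-1) ^ 2 + (K ^ 2 / (δ' + 1 / 2 - 2 * δ)) * (-t) ^ (2 * δ - 1)) := by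
        rw [hR_def, hE_def, hc_def, hq_def, hL_def]
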